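/- Refinement monotonicity of observational entropy: if coarse-graining C' = {Q_k} refines C = {P_i} (each P_i is a sum of some of the Q_k), then S_{C'}(ρ) ≤ S_C(ρ) for every density matrix ρ. -/

import Mathlib

open Real Matrix
open scoped ComplexOrder

variable {d : ℕ} {ι κ : Type*} [Fintype ι] [DecidableEq ι] [Fintype κ] [DecidableEq κ]

/-- Macrostate probability `p_i = tr(P_i ρ)`. -/
noncomputable def obsProb (P : ι → Matrix (Fin d) (Fin d) ℂ)
    (ρ : Matrix (Fin d) (Fin d) ℂ) (i : ι) : ℝ := ((P i * ρ).trace).re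

/-- Macrostate volume `V_i = tr(P_i)`. -/
noncomputable def obsVol (P : ι → Matrix (Fin d) (Fin d) ℂ) (i : ι) : ℝ :=
  ((P i).trace).re

/-- Observational entropy `S_C(ρ) = −∑_i p_i ln p_i + ∑_i p_i ln V_i`. -/
noncomputable def obsEntropy (P : ι → Matrix (Fin d) (Fin d) ℂ)
    (ρ : Matrix (Fin d) (Fin d) ℂ) : ℝ :=
  ∑ i, (Real.negMulLog (obsProb P ρ i) + obsProb P ρ i * Real.log (obsVol P i))


lemma trace_re_nonneg_of_psd {d : ℕ} {M : Matrix (Fin d) (Fin d) ℂ}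
    (hM : M.PosSemidef) : 0 ≤ M.trace.re := by
  have hdiag : ∀ i, 0 ≤ (M i i).re := fun i => by
    have h := hM.dotProduct_mulVec_nonneg (Pi.single i 1)
    have he : star (Pi.single i 1 : Fin d → ℂ) ⬝ᵥ M.mulVec (Pi.single i 1) = M i i := by
      simp [Matrix.mulVec_single, dotProduct, Pi.single_apply, star,
        apply_ite, Finset.sum_ite_eq, Complex.ext_iff]
    rw [he] at h
    exact (Complex.nonneg_iff.mp h).1
  rw [Matrix.trace, Complex.re_sum]
  exact Finset.sum_nonneg fun i _ => hdiag i

lemma trace_re_pos_of_proj {d : ℕ} {M : Matrix (Fin d) (Fin d) ℂ}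
    (hherm : M.IsHermitian) (hidem : M * M = M) (hnz : M ≠ 0) : 0 < M.trace.re := by
  have hM : M.trace = ∑ i, ∑ j, (Complex.normSq (M i j) : ℂ) := by
    conv_lhs => rw [← hidem]
    rw [Matrix.trace]
    congr 1; ext i
    rw [Matrix.diag_apply, Matrix.mul_apply]
    congr 1; ext j
    conv_lhs => rw [show M j i = star (M i j) by
      conv_lhs => rw [← hherm]
      rfl]
    rw [show star (M i j) = (starRingEnd ℂ) (M i j) from rfl, Complex.mul_conj']
    rw [Complex.normSq_eq_norm_sq]; push_cast; rfl
  rw [hM]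
  rw [Complex.re_sum]
  simp only [Complex.re_sum]
  have : ∃ i j, M i j ≠ 0 := by
    by_contra h
    push_neg at h
    exact hnz (by ext i j; simpa using h i j)
  obtain ⟨i, j, hij⟩ := this
  have : (0:ℝ) < ∑ j', Complex.normSq (M i j') := by
    have h1 : (0:ℝ) < Complex.normSq (M i j) := Complex.normSq_pos.mpr hij
    refine Finset.sum_pos' (fun _ _ => Complex.normSq_nonneg _) ⟨j, Finset.mem_univ j, h1⟩
  refine Finset.sum_pos' (fun i' _ => Finset.sum_nonneg fun _ _ => ?_) ⟨i, Finset.mem_univ i, ?_⟩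
  · simpa using Complex.normSq_nonneg _
  · simpa using this

lemma key_term (q v Qs Vs : ℝ) (hq : 0 ≤ q) (hv : 0 < v) (hQ : 0 < Qs) (hV : 0 < Vs) :
    Real.negMulLog q + q * Real.log v ≤ q * (Real.log Vs - Real.log Qs) + (v * Qs / Vs - q) := by
  rcases eq_or_lt_of_le hq with h0 | hqpos
  · rw [← h0]
    simp [Real.negMulLog]
    positivity
  · have hx : 0 < v * Qs / (q * Vs) := by positivity
    have hlog := Real.log_le_sub_one_of_pos hx
    have hmul := mul_le_mul_of_nonneg_left hlog hq
    have hqx : q * (v * Qs / (q * Vs)) = v * Qs / Vs := by field_simp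
    rw [Real.log_div (by positivity) (by positivity), Real.log_mul (ne_of_gt hv) (ne_of_gt hQ),
      Real.log_mul (ne_of_gt hqpos) (ne_of_gt hV)] at hmul
    rw [show q * (v * Qs / (q * Vs) - 1) = v * Qs / Vs - q from by field_simp] at hmul
    rw [Real.negMulLog]
    nlinarith [hmul]

lemma block_sum {κ : Type*} [Fintype κ] (s : Finset κ) (q v : κ → ℝ)
    (hq : ∀ k ∈ s, 0 ≤ q k) (hv : ∀ k ∈ s, 0 < v k)
    (hV : 0 < ∑ k ∈ s, v k) :
    ∑ k ∈ s, (Real.negMulLog (q k) + q k * Real.log (v k))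
      ≤ Real.negMulLog (∑ k ∈ s, q k) + (∑ k ∈ s, q k) * Real.log (∑ k ∈ s, v k) := by
  set Qs := ∑ k ∈ s, q k with hQs
  set Vs := ∑ k ∈ s, v k with hVs
  have hQ0 : 0 ≤ Qs := Finset.sum_nonneg hq
  rcases eq_or_lt_of_le hQ0 with h0 | hQpos
  · have hz : ∀ k ∈ s, q k = 0 := by
      intro k hk
      exact le_antisymm (by
        have := (Finset.sum_eq_zero_iff_of_nonneg hq).mp h0.symm
        exact le_of_eq (this k hk)) (hq k hk)
    rw [← h0]
    simp only [Real.negMulLog_zero, zero_mul, add_zero]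
    calc ∑ k ∈ s, (Real.negMulLog (q k) + q k * Real.log (v k))
        = ∑ k ∈ s, 0 := Finset.sum_congr rfl (fun k hk => by simp [hz k hk])
      _ ≤ 0 := by simp
  · calc ∑ k ∈ s, (Real.negMulLog (q k) + q k * Real.log (v k))
        ≤ ∑ k ∈ s, (q k * (Real.log Vs - Real.log Qs) + (v k * Qs / Vs - q k)) :=
          Finset.sum_le_sum fun k hk => key_term _ _ _ _ (hq k hk) (hv k hk) hQpos hV
      _ = Qs * (Real.log Vs - Real.log Qs) + (Vs * Qs / Vs - Qs) := by
          rw [Finset.sum_add_distrib, ← Finset.sum_mul, Finset.sum_sub_distrib]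
          congr 1
          rw [← Finset.sum_div, ← Finset.sum_mul]
      _ = Real.negMulLog Qs + Qs * Real.log Vs := by
          rw [Real.negMulLog]
          field_simp
          ring

lemma trace_mul_re_nonneg {d : ℕ} {A ρ : Matrix (Fin d) (Fin d) ℂ}
    (hherm : A.IsHermitian) (hidem : A * A = A) (hρ : ρ.PosSemidef) :
    0 ≤ ((A * ρ).trace).re := by
  have h1 : (A * ρ).trace = (A * ρ * A).trace := by
    rw [Matrix.trace_mul_cycle]
    rw [hidem]
  rw [h1]
  have h2 : (A * ρ * A).PosSemidef := by
    have := hρ.mul_mul_conjTranspose_same A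
    rwa [hherm.eq] at this
  exact trace_re_nonneg_of_psd h2

/-- refinement monotonicity of observational entropy.  If the
coarse-graining `{Q_k}` refines `{P_i}` (each `P_i` is the sum of the `Q_k`
in its block, as given by a block-assignment map `g`), then
`S_{C'}(ρ) ≤ S_C(ρ)` for every density matrix `ρ`. -/
theorem obsEntropy_antitone_refinement
    (P : ι → Matrix (Fin d) (Fin d) ℂ) (Q : κ → Matrix (Fin d) (Fin d) ℂ)
    (hhermP : ∀ i, (P i).IsHermitian) (hidemP : ∀ i, P i * P i = P i)
    (hnzP : ∀ i, P i ≠ 0) (horthP : ∀ i j, i ≠ j → P i * P j = 0)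
    (hsumP : ∑ i, P i = 1)
    (hhermQ : ∀ k, (Q k).IsHermitian) (hidemQ : ∀ k, Q k * Q k = Q k)
    (hnzQ : ∀ k, Q k ≠ 0) (horthQ : ∀ k l, k ≠ l → Q k * Q l = 0)
    (hsumQ : ∑ k, Q k = 1)
    (g : κ → ι) (hrefine : ∀ i, P i = ∑ k ∈ Finset.univ.filter (g · = i), Q k)
    (ρ : Matrix (Fin d) (Fin d) ℂ) (hρ : ρ.PosSemidef) (htr : ρ.trace = 1) :
    obsEntropy Q ρ ≤ obsEntropy P ρ := by
  have hp : ∀ i, obsProb P ρ i = ∑ k ∈ Finset.univ.filter (g · = i), obsProb Q ρ k := by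
    intro i
    unfold obsProb
    rw [hrefine i, Finset.sum_mul, Matrix.trace_sum, Complex.re_sum]
  have hv : ∀ i, obsVol P i = ∑ k ∈ Finset.univ.filter (g · = i), obsVol Q k := by
    intro i
    unfold obsVol
    rw [hrefine i, Matrix.trace_sum, Complex.re_sum]
  unfold obsEntropy
  rw [← Finset.sum_fiberwise Finset.univ g
    (fun k => Real.negMulLog (obsProb Q ρ k) + obsProb Q ρ k * Real.log (obsVol Q k))]
  refine Finset.sum_le_sum fun i _ => ?_
  rw [hp i, hv i]
  refine block_sum _ _ _ (fun k _ => ?_) (fun k _ => ?_) ?_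
  · exact trace_mul_re_nonneg (hhermQ k) (hidemQ k) hρ
  · exact trace_re_pos_of_proj (hhermQ k) (hidemQ k) (hnzQ k)
  · rw [← hv i]
    exact trace_re_pos_of_proj (hhermP i) (hidemP i) (hnzP i)
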